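/- Let α₁ ∈ (0,1), c > 0, λ = 2 + 2α₁, η ∈ (0, c²/α₁), and γ_η = log( 1 + η/2 + √((1 + η/2)² − 1) ). For every θ ∈ ℂ with |Im θ| < γ_η, setting φ(θ) = λ + c² − 2α₁ cos θ and K(θ) = (φ(θ) + (φ(θ)² − 4)^{1/2})/2 with the principal branch of the complex square root, one has: (a) |cos θ| < 1 + η/2; (b) Re(φ(θ)) ≥ 2 + (c² − η·α₁) > 2; (c) |φ(θ)² − 4| > 4(c² − η·α₁); and (d) |K(θ)| > 1. -/

import Mathlib

/-- `K(θ) = (φ(θ) + (φ(θ)² − 4)^{1/2})/2` with `φ(θ) = λ + c² − 2α₁ cos θ`,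
complex cosine and principal branch of the complex square root. -/
noncomputable def Kc (α₁ c : ℝ) (θ : ℂ) : ℂ :=
  (((2 + 2 * α₁ + c ^ 2 : ℂ) - 2 * (α₁ : ℂ) * Complex.cos θ) +
    ((((2 + 2 * α₁ + c ^ 2 : ℂ) - 2 * (α₁ : ℂ) * Complex.cos θ) ^ 2 - 4) ^ (1 / 2 : ℂ))) / 2

lemma re_sqrt_nonneg' (z : ℂ) : 0 ≤ (z ^ (1/2 : ℂ)).re := by
  rcases eq_or_ne z 0 with rfl | hz
  · rw [Complex.zero_cpow (by norm_num)]; simp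
  · rw [Complex.cpow_def_of_ne_zero hz, Complex.exp_re]
    have him : (Complex.log z * (1/2 : ℂ)).im = z.arg / 2 := by
      simp [Complex.mul_im, Complex.log_im, Complex.log_re]
      ring
    rw [him]
    have h1 := Complex.arg_mem_Ioc z
    have hpi := Real.pi_pos
    have hcos : 0 ≤ Real.cos (z.arg / 2) :=
      Real.cos_nonneg_of_mem_Icc ⟨by linarith [h1.1], by linarith [h1.2]⟩
    positivity

lemma abs_cos_le_cosh (z : ℂ) : ‖Complex.cos z‖ ≤ Real.cosh z.im := by
  rw [Complex.cos_eq, ← Complex.ofReal_cos, ← Complex.ofReal_cosh, ← Complex.ofReal_sin,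
    ← Complex.ofReal_sinh, ← Complex.ofReal_mul, ← Complex.ofReal_mul]
  rw [Complex.norm_def]
  have hns : Complex.normSq (↑(Real.cos z.re * Real.cosh z.im) -
      ↑(Real.sin z.re * Real.sinh z.im) * Complex.I) =
      (Real.cos z.re * Real.cosh z.im) ^ 2 + (Real.sin z.re * Real.sinh z.im) ^ 2 := by
    simp [Complex.normSq_apply, Complex.cos_ofReal_re, Complex.sin_ofReal_re,
      Complex.sinh_ofReal_re]; ring
  rw [hns]
  have h1 : Real.sin z.re ^ 2 + Real.cos z.re ^ 2 = 1 := Real.sin_sq_add_cos_sq _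
  have h2 : Real.cosh z.im ^ 2 - Real.sinh z.im ^ 2 = 1 := Real.cosh_sq_sub_sinh_sq _
  have h3 : 0 ≤ Real.cosh z.im := (Real.cosh_pos (x := z.im)).le
  have key : (Real.cos z.re * Real.cosh z.im) ^ 2 + (Real.sin z.re * Real.sinh z.im) ^ 2
      ≤ Real.cosh z.im ^ 2 := by nlinarith [sq_nonneg (Real.sin z.re)]
  calc Real.sqrt _ ≤ Real.sqrt (Real.cosh z.im ^ 2) := Real.sqrt_le_sqrt key
    _ = Real.cosh z.im := Real.sqrt_sq h3

/-- Bounds on `cos θ`, `φ(θ)`, `φ(θ)² − 4` and `K(θ)` in the strip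
`|Im θ| < γ_η = log(1 + η/2 + √((1+η/2)² − 1))`. -/

theorem stmt16 (α₁ c η : ℝ) (hα : α₁ ∈ Set.Ioo (0 : ℝ) 1) (hc : 0 < c)
    (hη : η ∈ Set.Ioo (0 : ℝ) (c ^ 2 / α₁)) (θ : ℂ)
    (hθ : |θ.im| < Real.log (1 + η / 2 + Real.sqrt ((1 + η / 2) ^ 2 - 1))) :
    ‖Complex.cos θ‖ < 1 + η / 2 ∧
      (2 + (c ^ 2 - η * α₁) ≤
          ((2 + 2 * α₁ + c ^ 2 : ℂ) - 2 * (α₁ : ℂ) * Complex.cos θ).re ∧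
        (2 : ℝ) < 2 + (c ^ 2 - η * α₁)) ∧
      4 * (c ^ 2 - η * α₁) <
        ‖((2 + 2 * α₁ + c ^ 2 : ℂ) - 2 * (α₁ : ℂ) * Complex.cos θ) ^ 2 - 4‖ ∧
      1 < ‖Kc α₁ c θ‖ := by
  obtain ⟨hα0, hα1⟩ := hα
  obtain ⟨hη0, hη1⟩ := hη
  set t : ℝ := 1 + η / 2 with ht_def
  have ht : 1 < t := by simp [ht_def]; linarith
  set s : ℝ := Real.sqrt (t ^ 2 - 1) with hs_def
  have hs2 : s ^ 2 = t ^ 2 - 1 := Real.sq_sqrt (by nlinarith)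
  have hsnn : 0 ≤ s := Real.sqrt_nonneg _
  have hts : 0 < t + s := by linarith
  set γ : ℝ := Real.log (t + s) with hγ_def
  have hγ0 : 0 ≤ γ := Real.log_nonneg (by linarith)
  have hcoshγ : Real.cosh γ = t := by
    rw [hγ_def, Real.cosh_eq, Real.exp_log hts, Real.exp_neg, Real.exp_log hts]
    field_simp
    nlinarith
  -- (a)
  have ha : ‖Complex.cos θ‖ < t := by
    calc ‖Complex.cos θ‖ ≤ Real.cosh θ.im := abs_cos_le_cosh θ
      _ = Real.cosh |θ.im| := (Real.cosh_abs θ.im).symm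
      _ < Real.cosh γ := by
          rw [Real.cosh_lt_cosh, abs_abs, abs_of_nonneg hγ0]; exact hθ
      _ = t := hcoshγ
  have hrecos : (Complex.cos θ).re ≤ ‖Complex.cos θ‖ := Complex.re_le_norm _
  have hd : 0 < c ^ 2 - η * α₁ := by
    have := (lt_div_iff₀ hα0).mp hη1
    linarith
  have hreφ : ((2 + 2 * α₁ + c ^ 2 : ℂ) - 2 * (α₁ : ℂ) * Complex.cos θ).re
      = 2 + 2 * α₁ + c ^ 2 - 2 * α₁ * (Complex.cos θ).re := by
    have e : (2 + 2 * (α₁:ℂ) + (c:ℂ) ^ 2) - 2 * (α₁ : ℂ) * Complex.cos θ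
        = ((2 + 2 * α₁ + c ^ 2 : ℝ) : ℂ) - ((2 * α₁ : ℝ) : ℂ) * Complex.cos θ := by
      push_cast; ring
    rw [e, Complex.sub_re, Complex.ofReal_re, Complex.re_ofReal_mul]
  have habs : ∀ z : ℂ, z.re ≤ ‖z‖ := fun z => Complex.re_le_norm z
  have hb : 2 + (c ^ 2 - η * α₁) <
      ((2 + 2 * α₁ + c ^ 2 : ℂ) - 2 * (α₁ : ℂ) * Complex.cos θ).re := by
    rw [hreφ]
    have : (Complex.cos θ).re < t := lt_of_le_of_lt hrecos ha
    simp only [ht_def] at this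
    nlinarith
  set φ : ℂ := (2 + 2 * α₁ + c ^ 2 : ℂ) - 2 * (α₁ : ℂ) * Complex.cos θ with hφ_def
  -- (c)
  have hc1 : (c ^ 2 - η * α₁ : ℝ) < ‖φ - 2‖ := by
    calc (c ^ 2 - η * α₁ : ℝ) < (φ - 2).re := by
          rw [Complex.sub_re]; simp only [Complex.re_ofNat]; linarith
      _ ≤ ‖φ - 2‖ := habs _
  have hc2 : (4 : ℝ) < ‖φ + 2‖ := by
    calc (4 : ℝ) < (φ + 2).re := by
          rw [Complex.add_re]; simp only [Complex.re_ofNat]; linarith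
      _ ≤ ‖φ + 2‖ := habs _
  have hcc : 4 * (c ^ 2 - η * α₁) < ‖φ ^ 2 - 4‖ := by
    have hfac : φ ^ 2 - 4 = (φ - 2) * (φ + 2) := by ring
    rw [hfac, norm_mul]
    nlinarith [norm_nonneg (φ - 2), norm_nonneg (φ + 2)]
  -- (d)
  have hdd : 1 < ‖Kc α₁ c θ‖ := by
    have hw : 0 ≤ ((φ ^ 2 - 4) ^ (1 / 2 : ℂ)).re := re_sqrt_nonneg' _
    have h2 : (2 : ℝ) < ‖φ + (φ ^ 2 - 4) ^ (1 / 2 : ℂ)‖ := by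
      calc (2 : ℝ) < (φ + (φ ^ 2 - 4) ^ (1 / 2 : ℂ)).re := by
            rw [Complex.add_re]; linarith
        _ ≤ _ := habs _
    rw [Kc, norm_div]
    rw [show ‖(2:ℂ)‖ = 2 by simp]
    rw [← hφ_def]
    linarith
  exact ⟨ha, ⟨hb.le, by linarith⟩, hcc, hdd⟩
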